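/- Let {x_n} be a frame for H with analysis operator C : H → ℓ², C(x) = (⟨x, x_n⟩), and let α = (1/‖x_n‖). If Range(C) ⊆ Dom(D_α), where D_α is the diagonal operator (d_n) ↦ (α_n d_n) defined on {(d_n) : (α_n d_n) ∈ ℓ²}, then {x_n/‖x_n‖} is a Bessel sequence (hence a frame) for H. -/

import Mathlib

open scoped ComplexInnerProductSpace ENNReal
open Filter Topology

noncomputable section

variable {E : Type*} [NormedAddCommGroup E] [InnerProductSpace ℂ E]

/-- `y` is a Bessel sequence with Bessel bound `B`:
`∑ᵢ |⟪z, yᵢ⟫|² ≤ B‖z‖²` for all `z` (sum taken in `ℝ≥0∞` so that divergence is handled). -/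
def BesselWith {ι : Type*} (y : ι → E) (B : ℝ) : Prop :=
  ∀ z : E, ∑' i, ENNReal.ofReal (‖⟪z, y i⟫‖ ^ 2) ≤ ENNReal.ofReal (B * ‖z‖ ^ 2)

/-- `y` satisfies the lower frame condition with bound `A`:
`A‖z‖² ≤ ∑ᵢ |⟪z, yᵢ⟫|²` for all `z`. -/
def LowerFrameWith {ι : Type*} (y : ι → E) (A : ℝ) : Prop :=
  ∀ z : E, ENNReal.ofReal (A * ‖z‖ ^ 2) ≤ ∑' i, ENNReal.ofReal (‖⟪z, y i⟫‖ ^ 2)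

/-- `y` is a frame with frame bounds `A ≤ B`. -/
def FrameWith {ι : Type*} (y : ι → E) (A B : ℝ) : Prop :=
  0 < A ∧ A ≤ B ∧ LowerFrameWith y A ∧ BesselWith y B

/-- The normalized sequence `yᵢ/‖yᵢ‖`. -/
def normalizeSeq {ι : Type*} (y : ι → E) : ι → E := fun i => (‖y i‖ : ℂ)⁻¹ • y i

/-- If `{x_n}` is a frame whose analysis operator has range contained in the
domain of the diagonal operator `D_α` with `α_n = 1/‖x_n‖` (i.e. for every `z` the sequence
`(⟪z, x_n⟫/‖x_n‖)` is in `ℓ²`), then the normalized sequence is a Bessel sequence, and in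
fact a frame for `H`. -/
theorem stmt5 {H : Type*} [NormedAddCommGroup H] [InnerProductSpace ℂ H] [CompleteSpace H]
    (x : ℕ → H) (hx : ∀ n, x n ≠ 0)
    (hframe : ∃ A B : ℝ, FrameWith x A B)
    (hdom : ∀ z : H, Memℓp (fun n => (‖x n‖ : ℂ)⁻¹ * ⟪z, x n⟫) 2) :
    (∃ C : ℝ, BesselWith (normalizeSeq x) C) ∧ ∃ A' B' : ℝ, FrameWith (normalizeSeq x) A' B' := by
  obtain ⟨A, B, hA, hAB, hlow, hbes⟩ := hframe
  have hB0 : 0 < B := lt_of_lt_of_le hA hAB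
  haveI : Fact ((1:ℝ≥0∞) ≤ 2) := ⟨by norm_num⟩
  have hmem : ∀ z : H, Memℓp (fun n => (‖x n‖ : ℂ)⁻¹ * ⟪x n, z⟫) 2 := by
    intro z
    apply memℓp_gen
    have h := (hdom z).summable (by norm_num : 0 < (2:ℝ≥0∞).toReal)
    convert h using 2 with n
    rw [norm_mul, norm_mul, norm_inner_symm]
  set T : H →ₗ[ℂ] lp (fun _ : ℕ => ℂ) 2 :=
    { toFun := fun z => ⟨fun n => (‖x n‖ : ℂ)⁻¹ * ⟪x n, z⟫, hmem z⟩
      map_add' := by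
        intro a b; apply lp.ext; funext n
        simp [inner_add_right, mul_add]; rfl
      map_smul' := by
        intro c a; apply lp.ext; funext n
        simp [inner_smul_right]; ring } with hTdef
  have hT : Continuous T := by
    apply T.continuous_of_seq_closed_graph
    intro u z y hu hTu
    apply lp.ext; funext n
    have hev : Continuous fun f : lp (fun _ : ℕ => ℂ) 2 => f n := by
      apply (LipschitzWith.of_dist_le_mul (K := 1) ?_).continuous
      intro f g
      simp only [NNReal.coe_one, one_mul, dist_eq_norm]
      have := lp.norm_apply_le_norm (by norm_num : (2:ℝ≥0∞) ≠ 0) (f - g) n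
      simpa using this
    have h2 : Tendsto (fun k => (T (u k) : ∀ _ : ℕ, ℂ) n) atTop (𝓝 (y n)) :=
      (hev.tendsto y).comp hTu
    have h1 : Tendsto (fun k => (T (u k) : ∀ _ : ℕ, ℂ) n) atTop
        (𝓝 ((‖x n‖ : ℂ)⁻¹ * ⟪x n, z⟫)) := by
      have hc : Continuous fun w : H => (‖x n‖ : ℂ)⁻¹ * ⟪x n, w⟫ :=
        continuous_const.mul (innerSL ℂ (x n)).continuous
      exact (hc.tendsto z).comp hu
    exact (tendsto_nhds_unique h2 h1)
  set T' : H →L[ℂ] lp (fun _ : ℕ => ℂ) 2 := ⟨T, hT⟩ with hT'def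
  -- pointwise identification
  have key : ∀ (z : H) (n : ℕ),
      ‖⟪z, normalizeSeq x n⟫‖ = ‖(‖x n‖ : ℂ)⁻¹ * ⟪x n, z⟫‖ := by
    intro z n
    simp only [normalizeSeq, inner_smul_right, norm_mul, norm_inner_symm]
  -- Bessel bound
  have hBessel : BesselWith (normalizeSeq x) (‖T'‖ ^ 2) := by
    intro z
    have hsum : Summable fun n => ‖(‖x n‖ : ℂ)⁻¹ * ⟪x n, z⟫‖ ^ 2 := by
      have h := (hmem z).summable (by norm_num : 0 < (2:ℝ≥0∞).toReal)
      convert h using 2 with n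
      rw [show ((2:ℝ≥0∞)).toReal = ((2:ℕ):ℝ) by norm_num, Real.rpow_natCast]
    have hts : ∑' n, ‖(‖x n‖ : ℂ)⁻¹ * ⟪x n, z⟫‖ ^ 2 = ‖T z‖ ^ 2 := by
      have h := lp.norm_rpow_eq_tsum (p := 2) (by norm_num) (T z)
      rw [show ((2:ℝ≥0∞)).toReal = ((2:ℕ):ℝ) by norm_num] at h
      simp only [Real.rpow_natCast] at h
      exact h.symm
    calc ∑' n, ENNReal.ofReal (‖⟪z, normalizeSeq x n⟫‖ ^ 2)
        = ∑' n, ENNReal.ofReal (‖(‖x n‖ : ℂ)⁻¹ * ⟪x n, z⟫‖ ^ 2) := by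
          congr 1; funext n; rw [key z n]
      _ = ENNReal.ofReal (∑' n, ‖(‖x n‖ : ℂ)⁻¹ * ⟪x n, z⟫‖ ^ 2) :=
          (ENNReal.ofReal_tsum_of_nonneg (fun n => sq_nonneg _) hsum).symm
      _ ≤ ENNReal.ofReal (‖T'‖ ^ 2 * ‖z‖ ^ 2) := by
          apply ENNReal.ofReal_le_ofReal
          rw [hts]
          have h1 : ‖T z‖ ≤ ‖T'‖ * ‖z‖ := T'.le_opNorm z
          calc ‖T z‖ ^ 2 ≤ (‖T'‖ * ‖z‖) ^ 2 :=
                pow_le_pow_left₀ (norm_nonneg _) h1 2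
            _ = ‖T'‖ ^ 2 * ‖z‖ ^ 2 := by ring
  -- upper bound on the norms of the frame vectors
  have hxB : ∀ n, ‖x n‖ ^ 2 ≤ B := by
    intro n
    have h1 : ENNReal.ofReal (‖⟪(x n : H), x n⟫‖ ^ 2) ≤ ENNReal.ofReal (B * ‖x n‖ ^ 2) :=
      le_trans (ENNReal.le_tsum n) (hbes (x n))
    have h2 : ‖⟪(x n : H), x n⟫‖ = ‖x n‖ ^ 2 := by
      rw [inner_self_eq_norm_sq_to_K]
      simp
    rw [h2] at h1
    have h3 : (‖x n‖ ^ 2) ^ 2 ≤ B * ‖x n‖ ^ 2 :=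
      (ENNReal.ofReal_le_ofReal_iff (by positivity)).mp h1
    have hxn : 0 < ‖x n‖ ^ 2 := pow_pos (norm_pos_iff.mpr (hx n)) 2
    nlinarith
  -- lower frame bound for the normalized sequence
  have hlow' : LowerFrameWith (normalizeSeq x) (A / B) := by
    intro z
    have hpt : ∀ n, ENNReal.ofReal (B⁻¹ * ‖⟪z, x n⟫‖ ^ 2)
        ≤ ENNReal.ofReal (‖⟪z, normalizeSeq x n⟫‖ ^ 2) := by
      intro n
      apply ENNReal.ofReal_le_ofReal
      have hxn : 0 < ‖x n‖ ^ 2 := pow_pos (norm_pos_iff.mpr (hx n)) 2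
      have hnorm : ‖⟪z, normalizeSeq x n⟫‖ ^ 2 = (‖x n‖ ^ 2)⁻¹ * ‖⟪z, x n⟫‖ ^ 2 := by
        simp only [normalizeSeq, inner_smul_right, norm_mul, mul_pow]
        congr 1
        rw [norm_inv, Complex.norm_real, Real.norm_eq_abs, abs_norm, inv_pow]
      rw [hnorm]
      have hinv : B⁻¹ ≤ (‖x n‖ ^ 2)⁻¹ := inv_anti₀ hxn (hxB n)
      exact mul_le_mul_of_nonneg_right hinv (sq_nonneg _)
    calc ENNReal.ofReal (A / B * ‖z‖ ^ 2)
        = ENNReal.ofReal B⁻¹ * ENNReal.ofReal (A * ‖z‖ ^ 2) := by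
          rw [← ENNReal.ofReal_mul (by positivity)]
          ring_nf
      _ ≤ ENNReal.ofReal B⁻¹ * ∑' n, ENNReal.ofReal (‖⟪z, x n⟫‖ ^ 2) :=
          mul_le_mul_right (hlow z) _
      _ = ∑' n, ENNReal.ofReal (B⁻¹ * ‖⟪z, x n⟫‖ ^ 2) := by
          rw [← ENNReal.tsum_mul_left]
          congr 1; funext n
          rw [← ENNReal.ofReal_mul (by positivity)]
      _ ≤ ∑' n, ENNReal.ofReal (‖⟪z, normalizeSeq x n⟫‖ ^ 2) := ENNReal.tsum_le_tsum hpt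
  refine ⟨⟨‖T'‖ ^ 2, hBessel⟩, A / B, max (‖T'‖ ^ 2) (A / B),
    div_pos hA hB0, le_max_right _ _, hlow', ?_⟩
  intro z
  refine le_trans (hBessel z) (ENNReal.ofReal_le_ofReal ?_)
  exact mul_le_mul_of_nonneg_right (le_max_left _ _) (sq_nonneg _)
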